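/- Let G be an ample groupoid such that G⁰ is σ-compact, and suppose that K ⊆ G⁰ is clopen and G-full. Then there is a sequence (V_i)_{i=1}^∞ of compact open bisections V_i ⊆ GK with mutually disjoint ranges such that the disjoint union ⨆_i r(V_i) equals G⁰. -/

import Mathlib

universe u v w

/-- An (algebraic) groupoid structure on a type `G` of arrows.  The multiplication is a total
function, but all axioms involving `mul a b` are only imposed when `a` and `b` are composable,
i.e. when `src a = rng b`.  Units are the common values of `src` and `rng`. -/
structure GroupoidStruct (G : Type u) where
  src : G → G
  rng : G → G
  mul : G → G → G
  inv : G → G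
  src_src : ∀ a, src (src a) = src a
  rng_src : ∀ a, rng (src a) = src a
  src_rng : ∀ a, src (rng a) = rng a
  rng_rng : ∀ a, rng (rng a) = rng a
  mul_assoc : ∀ a b c, src a = rng b → src b = rng c → mul (mul a b) c = mul a (mul b c)
  src_mul : ∀ a b, src a = rng b → src (mul a b) = src b
  rng_mul : ∀ a b, src a = rng b → rng (mul a b) = rng a
  mul_src : ∀ a, mul a (src a) = a
  rng_mul_self : ∀ a, mul (rng a) a = a
  src_inv : ∀ a, src (inv a) = rng a
  rng_inv : ∀ a, rng (inv a) = src a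
  mul_inv : ∀ a, mul a (inv a) = rng a
  inv_mul : ∀ a, mul (inv a) a = src a

namespace GroupoidStruct

variable {G : Type u} {H : Type v}

/-- The unit space `G⁰` of a groupoid. -/
def units (S : GroupoidStruct G) : Set G := {x | S.src x = x ∧ S.rng x = x}

/-- The range map, viewed as a map `G → G⁰`. -/
def rngMap (S : GroupoidStruct G) (g : G) : S.units := ⟨S.rng g, S.src_rng g, S.rng_rng g⟩

/-- The source map, viewed as a map `G → G⁰`. -/
def srcMap (S : GroupoidStruct G) (g : G) : S.units := ⟨S.src g, S.src_src g, S.rng_src g⟩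

/-- A topological groupoid: inversion is continuous and multiplication is continuous on the
set of composable pairs. -/
structure IsTopologicalGroupoid [TopologicalSpace G] (S : GroupoidStruct G) : Prop where
  continuous_inv : Continuous S.inv
  continuousOn_mul :
    ContinuousOn (fun p : G × G => S.mul p.1 p.2) {p : G × G | S.src p.1 = S.rng p.2}

/-- An ample groupoid: a topological groupoid whose topology has a basis of compact open sets,
whose unit space is Hausdorff, and whose range and source maps are local homeomorphisms onto
the unit space. -/
structure IsAmple [TopologicalSpace G] (S : GroupoidStruct G)
    extends IsTopologicalGroupoid S : Prop where
  compact_open_basis : ∃ B : Set (Set G),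
    (∀ U ∈ B, IsCompact U ∧ IsOpen U) ∧ TopologicalSpace.IsTopologicalBasis B
  t2_units : T2Space S.units
  isLocalHomeomorph_rngMap : IsLocalHomeomorph S.rngMap
  isLocalHomeomorph_srcMap : IsLocalHomeomorph S.srcMap

/-- `K ⊆ G⁰` is `G`-full if `r(GK) = G⁰`, where `GK = s⁻¹(K)`. -/
def IsFull (S : GroupoidStruct G) (K : Set G) : Prop := S.rng '' (S.src ⁻¹' K) = S.units

/-- `K` is an open subset of the unit space (in the subspace topology of `G⁰`). -/
def IsUnitOpen [TopologicalSpace G] (S : GroupoidStruct G) (K : Set G) : Prop :=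
  K ⊆ S.units ∧ IsOpen {x : S.units | (x : G) ∈ K}

/-- `K` is a clopen subset of the unit space (in the subspace topology of `G⁰`). -/
def IsUnitClopen [TopologicalSpace G] (S : GroupoidStruct G) (K : Set G) : Prop :=
  K ⊆ S.units ∧ IsClopen {x : S.units | (x : G) ∈ K}

/-- `K` is a compact open subset of the unit space. -/
def IsUnitCompactOpen [TopologicalSpace G] (S : GroupoidStruct G) (K : Set G) : Prop :=
  K ⊆ S.units ∧ IsCompact K ∧ IsOpen {x : S.units | (x : G) ∈ K}

/-- An open bisection: an open set on which both the range and the source map restrict to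
homeomorphisms onto their images (i.e. are topological embeddings). -/
def IsOpenBisection [TopologicalSpace G] (S : GroupoidStruct G) (U : Set G) : Prop :=
  IsOpen U ∧ Topology.IsEmbedding (U.restrict S.rng) ∧ Topology.IsEmbedding (U.restrict S.src)

/-- A compact open bisection. -/
def IsCompactOpenBisection [TopologicalSpace G] (S : GroupoidStruct G) (U : Set G) : Prop :=
  IsCompact U ∧ S.IsOpenBisection U

/-- The product of two groupoids, with coordinatewise operations. -/
def prod (S : GroupoidStruct G) (T : GroupoidStruct H) : GroupoidStruct (G × H) where
  src p := (S.src p.1, T.src p.2)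
  rng p := (S.rng p.1, T.rng p.2)
  mul p q := (S.mul p.1 q.1, T.mul p.2 q.2)
  inv p := (S.inv p.1, T.inv p.2)
  src_src a := Prod.ext_iff.mpr ⟨S.src_src _, T.src_src _⟩
  rng_src a := Prod.ext_iff.mpr ⟨S.rng_src _, T.rng_src _⟩
  src_rng a := Prod.ext_iff.mpr ⟨S.src_rng _, T.src_rng _⟩
  rng_rng a := Prod.ext_iff.mpr ⟨S.rng_rng _, T.rng_rng _⟩
  mul_assoc a b c h1 h2 := by
    obtain ⟨h1a, h1b⟩ := Prod.ext_iff.mp h1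
    obtain ⟨h2a, h2b⟩ := Prod.ext_iff.mp h2
    exact Prod.ext_iff.mpr ⟨S.mul_assoc _ _ _ h1a h2a, T.mul_assoc _ _ _ h1b h2b⟩
  src_mul a b h := by
    obtain ⟨ha, hb⟩ := Prod.ext_iff.mp h
    exact Prod.ext_iff.mpr ⟨S.src_mul _ _ ha, T.src_mul _ _ hb⟩
  rng_mul a b h := by
    obtain ⟨ha, hb⟩ := Prod.ext_iff.mp h
    exact Prod.ext_iff.mpr ⟨S.rng_mul _ _ ha, T.rng_mul _ _ hb⟩
  mul_src a := Prod.ext_iff.mpr ⟨S.mul_src _, T.mul_src _⟩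
  rng_mul_self a := Prod.ext_iff.mpr ⟨S.rng_mul_self _, T.rng_mul_self _⟩
  src_inv a := Prod.ext_iff.mpr ⟨S.src_inv _, T.src_inv _⟩
  rng_inv a := Prod.ext_iff.mpr ⟨S.rng_inv _, T.rng_inv _⟩
  mul_inv a := Prod.ext_iff.mpr ⟨S.mul_inv _, T.mul_inv _⟩
  inv_mul a := Prod.ext_iff.mpr ⟨S.inv_mul _, T.inv_mul _⟩

/-- The full equivalence relation `ℛ = ℕ × ℕ`, regarded as a (discrete, principal) groupoid
with unit space `ℕ`. -/
def Rho : GroupoidStruct (ℕ × ℕ) where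
  src p := (p.2, p.2)
  rng p := (p.1, p.1)
  mul p q := (p.1, q.2)
  inv p := (p.2, p.1)
  src_src _ := rfl
  rng_src _ := rfl
  src_rng _ := rfl
  rng_rng _ := rfl
  mul_assoc _ _ _ _ _ := rfl
  src_mul _ _ _ := rfl
  rng_mul _ _ _ := rfl
  mul_src _ := rfl
  rng_mul_self _ := rfl
  src_inv _ := rfl
  rng_inv _ := rfl
  mul_inv _ := rfl
  inv_mul _ := rfl

/-- An isomorphism of topological groupoids: a homeomorphism of the arrow spaces respecting
all the groupoid operations. -/
structure GroupoidIso [TopologicalSpace G] [TopologicalSpace H]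
    (S : GroupoidStruct G) (T : GroupoidStruct H) extends G ≃ₜ H where
  map_mul : ∀ a b, S.src a = S.rng b →
    toHomeomorph (S.mul a b) = T.mul (toHomeomorph a) (toHomeomorph b)
  map_inv : ∀ a, toHomeomorph (S.inv a) = T.inv (toHomeomorph a)
  map_src : ∀ a, toHomeomorph (S.src a) = T.src (toHomeomorph a)
  map_rng : ∀ a, toHomeomorph (S.rng a) = T.rng (toHomeomorph a)

/-- The arrow space `G|_K = r⁻¹(K) ∩ s⁻¹(K)` of the restriction of `G` to `K ⊆ G⁰`,
with the subspace topology. -/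
abbrev Restrict (S : GroupoidStruct G) (K : Set G) : Type u :=
  {g : G // S.rng g ∈ K ∧ S.src g ∈ K}

variable (S : GroupoidStruct G) (K : Set G)

def rsrc (a : S.Restrict K) : S.Restrict K :=
  ⟨S.src a.1, by rw [S.rng_src]; exact a.2.2, by rw [S.src_src]; exact a.2.2⟩

def rrng (a : S.Restrict K) : S.Restrict K :=
  ⟨S.rng a.1, by rw [S.rng_rng]; exact a.2.1, by rw [S.src_rng]; exact a.2.1⟩

def rinv (a : S.Restrict K) : S.Restrict K :=
  ⟨S.inv a.1, by rw [S.rng_inv]; exact a.2.2, by rw [S.src_inv]; exact a.2.1⟩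

open Classical in
noncomputable def rmul (a b : S.Restrict K) : S.Restrict K :=
  if h : S.src a.1 = S.rng b.1 then
    ⟨S.mul a.1 b.1, by rw [S.rng_mul _ _ h]; exact a.2.1, by rw [S.src_mul _ _ h]; exact b.2.2⟩
  else a

@[simp] lemma rsrc_val (a : S.Restrict K) : (S.rsrc K a).1 = S.src a.1 := rfl
@[simp] lemma rrng_val (a : S.Restrict K) : (S.rrng K a).1 = S.rng a.1 := rfl
@[simp] lemma rinv_val (a : S.Restrict K) : (S.rinv K a).1 = S.inv a.1 := rfl

lemma rmul_val (a b : S.Restrict K) (h : S.src a.1 = S.rng b.1) :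
    (S.rmul K a b).1 = S.mul a.1 b.1 := by
  unfold rmul
  rw [dif_pos h]

/-- The restriction `G|_K` of a groupoid to a subset `K` of its unit space. -/
noncomputable def restrict : GroupoidStruct (S.Restrict K) where
  src := S.rsrc K
  rng := S.rrng K
  mul := S.rmul K
  inv := S.rinv K
  src_src a := Subtype.ext (S.src_src a.1)
  rng_src a := Subtype.ext (S.rng_src a.1)
  src_rng a := Subtype.ext (S.src_rng a.1)
  rng_rng a := Subtype.ext (S.rng_rng a.1)
  mul_assoc a b c h1 h2 := by
    have h1' : S.src a.1 = S.rng b.1 := congrArg Subtype.val h1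
    have h2' : S.src b.1 = S.rng c.1 := congrArg Subtype.val h2
    have hab := S.rmul_val K a b h1'
    have hbc := S.rmul_val K b c h2'
    apply Subtype.ext
    calc (S.rmul K (S.rmul K a b) c).1
        = S.mul (S.rmul K a b).1 c.1 :=
          S.rmul_val K _ _ (by rw [hab, S.src_mul _ _ h1']; exact h2')
      _ = S.mul (S.mul a.1 b.1) c.1 := by rw [hab]
      _ = S.mul a.1 (S.mul b.1 c.1) := S.mul_assoc _ _ _ h1' h2'
      _ = S.mul a.1 (S.rmul K b c).1 := by rw [hbc]
      _ = (S.rmul K a (S.rmul K b c)).1 :=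
          (S.rmul_val K _ _ (by rw [hbc, S.rng_mul _ _ h2']; exact h1')).symm
  src_mul a b h := by
    have h' : S.src a.1 = S.rng b.1 := congrArg Subtype.val h
    apply Subtype.ext
    show S.src (S.rmul K a b).1 = S.src b.1
    rw [S.rmul_val K a b h', S.src_mul _ _ h']
  rng_mul a b h := by
    have h' : S.src a.1 = S.rng b.1 := congrArg Subtype.val h
    apply Subtype.ext
    show S.rng (S.rmul K a b).1 = S.rng a.1
    rw [S.rmul_val K a b h', S.rng_mul _ _ h']
  mul_src a := by
    apply Subtype.ext
    rw [S.rmul_val K a _ (by rw [rsrc_val, S.rng_src]), rsrc_val]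
    exact S.mul_src a.1
  rng_mul_self a := by
    apply Subtype.ext
    rw [S.rmul_val K _ a (by rw [rrng_val, S.src_rng]), rrng_val]
    exact S.rng_mul_self a.1
  src_inv a := Subtype.ext (S.src_inv a.1)
  rng_inv a := Subtype.ext (S.rng_inv a.1)
  mul_inv a := by
    apply Subtype.ext
    rw [S.rmul_val K a _ (by rw [rinv_val, S.rng_inv]), rinv_val]
    exact S.mul_inv a.1
  inv_mul a := by
    apply Subtype.ext
    rw [S.rmul_val K _ a (by rw [rinv_val, S.src_inv]), rinv_val]
    exact S.inv_mul a.1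

variable {S K}

/-- The data of a groupoid equivalence between `G` and `H`: a space `Z` carrying commuting
free and proper continuous actions of `G` (on the left) and `H` (on the right), whose anchor
maps `ρ : Z → G⁰` and `σ : Z → H⁰` induce homeomorphisms `Z/H ≅ G⁰` and `G\Z ≅ H⁰`.
The latter conditions are encoded by requiring that the fibres of `ρ` are exactly the
`H`-orbits, that `ρ` is surjective onto `G⁰`, and that `ρ` is a topological quotient map onto
`G⁰` (and symmetrically for `σ`): this says precisely that the induced map `Z/H → G⁰` is a
homeomorphism. -/
structure GroupoidEquivalenceData [TopologicalSpace G] [TopologicalSpace H]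
    (S : GroupoidStruct G) (T : GroupoidStruct H) (Z : Type w) [TopologicalSpace Z] where
  ρ : Z → G
  σ : Z → H
  ρ_unit : ∀ z, ρ z ∈ S.units
  σ_unit : ∀ z, σ z ∈ T.units
  continuous_ρ : Continuous ρ
  continuous_σ : Continuous σ
  actL : G → Z → Z
  actR : Z → H → Z
  ρ_actL : ∀ g z, S.src g = ρ z → ρ (actL g z) = S.rng g
  σ_actL : ∀ g z, S.src g = ρ z → σ (actL g z) = σ z
  actL_unit : ∀ z, actL (ρ z) z = z
  actL_mul : ∀ g g' z, S.src g = S.rng g' → S.src g' = ρ z →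
    actL (S.mul g g') z = actL g (actL g' z)
  σ_actR : ∀ z h, σ z = T.rng h → σ (actR z h) = T.src h
  ρ_actR : ∀ z h, σ z = T.rng h → ρ (actR z h) = ρ z
  actR_unit : ∀ z, actR z (σ z) = z
  actR_mul : ∀ z h h', σ z = T.rng h → T.src h = T.rng h' →
    actR (actR z h) h' = actR z (T.mul h h')
  act_comm : ∀ g z h, S.src g = ρ z → σ z = T.rng h →
    actL g (actR z h) = actR (actL g z) h
  continuousOn_actL :
    ContinuousOn (fun p : G × Z => actL p.1 p.2) {p : G × Z | S.src p.1 = ρ p.2}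
  continuousOn_actR :
    ContinuousOn (fun p : Z × H => actR p.1 p.2) {p : Z × H | σ p.1 = T.rng p.2}
  free_actL : ∀ g z, S.src g = ρ z → actL g z = z → g = ρ z
  free_actR : ∀ z h, σ z = T.rng h → actR z h = z → h = σ z
  proper_actL : IsProperMap (fun p : {q : G × Z // S.src q.1 = ρ q.2} =>
    ((actL p.1.1 p.1.2, p.1.2) : Z × Z))
  proper_actR : IsProperMap (fun p : {q : Z × H // σ q.1 = T.rng q.2} =>
    ((actR p.1.1 p.1.2, p.1.1) : Z × Z))
  ρ_fiber_orbit : ∀ z z', ρ z = ρ z' ↔ ∃ h, σ z = T.rng h ∧ z' = actR z h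
  σ_fiber_orbit : ∀ z z', σ z = σ z' ↔ ∃ g, S.src g = ρ z ∧ z' = actL g z
  ρ_surj : Set.range ρ = S.units
  σ_surj : Set.range σ = T.units
  quotient_ρ : Topology.IsQuotientMap (fun z => (⟨ρ z, ρ_unit z⟩ : S.units))
  quotient_σ : Topology.IsQuotientMap (fun z => (⟨σ z, σ_unit z⟩ : T.units))

/-- `G` and `H` are groupoid equivalent if there exists a `G`–`H` equivalence. -/
def GroupoidEquivalent [TopologicalSpace G] [TopologicalSpace H]
    (S : GroupoidStruct G) (T : GroupoidStruct H) : Prop :=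
  ∃ (Z : Type (max u v)) (_ : TopologicalSpace Z), Nonempty (GroupoidEquivalenceData S T Z)

/-- Kakutani equivalence of ample groupoids: there are full clopen subsets `X ⊆ G⁰`, `Y ⊆ H⁰`
with `G|_X ≅ H|_Y`. -/
def KakutaniEquivalent [TopologicalSpace G] [TopologicalSpace H]
    (S : GroupoidStruct G) (T : GroupoidStruct H) : Prop :=
  ∃ (X : Set G) (Y : Set H), S.IsUnitClopen X ∧ S.IsFull X ∧ T.IsUnitClopen Y ∧ T.IsFull Y ∧
    Nonempty (GroupoidIso (S.restrict X) (T.restrict Y))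

end GroupoidStruct

private lemma isEmbedding_restrict_mono {X Y : Type*} [TopologicalSpace X] [TopologicalSpace Y]
    {f : X → Y} {U V : Set X} (hVU : V ⊆ U) (h : Topology.IsEmbedding (U.restrict f)) :
    Topology.IsEmbedding (V.restrict f) := by
  have heq : V.restrict f = (U.restrict f) ∘ Set.inclusion hVU := rfl
  rw [heq]; exact h.comp (Topology.IsEmbedding.inclusion hVU)

private lemma isEmbedding_restrict_subset_source {X Y : Type*} [TopologicalSpace X]
    [TopologicalSpace Y] (e : OpenPartialHomeomorph X Y) {U : Set X} (hU : U ⊆ e.source) :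
    Topology.IsEmbedding (U.restrict (e : X → Y)) :=
  isEmbedding_restrict_mono hU e.isOpenEmbedding_restrict.isEmbedding

open GroupoidStruct in
private lemma empty_isCompactOpenBisection {G : Type u} [TopologicalSpace G]
    (S : GroupoidStruct G) : S.IsCompactOpenBisection (∅ : Set G) :=
  ⟨isCompact_empty, isOpen_empty, Topology.IsEmbedding.of_subsingleton _,
    Topology.IsEmbedding.of_subsingleton _⟩

open GroupoidStruct in
/-- For an ample groupoid with σ-compact unit space and a clopen `G`-full `K ⊆ G⁰`, there is a
sequence of compact open bisections `Vᵢ ⊆ GK` with mutually disjoint ranges such that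
`⨆ᵢ r(Vᵢ) = G⁰`. -/
theorem exists_bisections_covering_units
    {G : Type u} [TopologicalSpace G] (S : GroupoidStruct G)
    (hS : S.IsAmple) (hc : IsSigmaCompact S.units)
    {K : Set G} (hK : S.IsUnitClopen K) (hKf : S.IsFull K) :
    ∃ V : ℕ → Set G,
      (∀ i, S.IsCompactOpenBisection (V i)) ∧
      (∀ i, V i ⊆ S.src ⁻¹' K) ∧
      (Pairwise fun i j => Disjoint (S.rng '' V i) (S.rng '' V j)) ∧
      (⋃ i, S.rng '' V i) = S.units := by
  classical
  obtain ⟨B, hB, hBbasis⟩ := hS.compact_open_basis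
  haveI ht2 : T2Space S.units := hS.t2_units
  have hlr := hS.isLocalHomeomorph_rngMap
  have hls := hS.isLocalHomeomorph_srcMap
  have hrmem : ∀ g, S.rng g ∈ S.units := fun g => ⟨S.src_rng g, S.rng_rng g⟩
  -- the preimage of K under src is open
  have hKpre : S.src ⁻¹' K = S.srcMap ⁻¹' {x : S.units | (x : G) ∈ K} := rfl
  have hsrcK_open : IsOpen (S.src ⁻¹' K) := by
    rw [hKpre]; exact hK.2.isOpen.preimage hls.continuous
  -- range images vs rngMap images
  have himg : ∀ U : Set G, {x : S.units | (x : G) ∈ S.rng '' U} = S.rngMap '' U := by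
    intro U
    ext x
    constructor
    · rintro ⟨u, hu, he⟩
      exact ⟨u, hu, Subtype.ext he⟩
    · rintro ⟨u, hu, he⟩
      exact ⟨u, hu, congrArg Subtype.val he⟩
  have hpre : ∀ U : Set G, S.rng ⁻¹' (S.rng '' U) = S.rngMap ⁻¹' (S.rngMap '' U) := by
    intro U
    ext g
    constructor
    · rintro ⟨u, hu, he⟩
      exact ⟨u, hu, Subtype.ext he⟩
    · rintro ⟨u, hu, he⟩
      exact ⟨u, hu, congrArg Subtype.val he⟩
  -- for compact open U, the set rng⁻¹(rng '' U) is clopen in G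
  have hclopen : ∀ U : Set G, IsCompact U → IsOpen U →
      IsOpen (S.rng ⁻¹' (S.rng '' U)) ∧ IsClosed (S.rng ⁻¹' (S.rng '' U)) := by
    intro U hUc hUo
    have h1 : IsOpen (S.rngMap '' U) := hlr.isOpenMap U hUo
    have h2 : IsCompact (S.rngMap '' U) := hUc.image hlr.continuous
    rw [hpre U]
    exact ⟨h1.preimage hlr.continuous, h2.isClosed.preimage hlr.continuous⟩
  -- every unit is in the range of a compact open bisection inside GK
  have hmain : ∀ x : S.units, ∃ U : Set G,
      (S.IsCompactOpenBisection U ∧ U ⊆ S.src ⁻¹' K) ∧ (x : G) ∈ S.rng '' U := by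
    intro x
    have hx : (x : G) ∈ S.rng '' (S.src ⁻¹' K) := by rw [hKf]; exact x.2
    obtain ⟨g, hgK, hgx⟩ := hx
    obtain ⟨e, hge, hre⟩ := hlr g
    obtain ⟨e', hge', hse'⟩ := hls g
    have hOopen : IsOpen (e.source ∩ e'.source ∩ S.src ⁻¹' K) :=
      (e.open_source.inter e'.open_source).inter hsrcK_open
    have hgO : g ∈ e.source ∩ e'.source ∩ S.src ⁻¹' K := ⟨⟨hge, hge'⟩, hgK⟩
    obtain ⟨U, hUB, hgU, hUsub⟩ := hBbasis.exists_subset_of_mem_open hgO hOopen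
    obtain ⟨hUc, hUo⟩ := hB U hUB
    have hUe : U ⊆ e.source := fun u hu => (hUsub hu).1.1
    have hUe' : U ⊆ e'.source := fun u hu => (hUsub hu).1.2
    refine ⟨U, ⟨⟨hUc, hUo, ?_, ?_⟩, fun u hu => (hUsub hu).2⟩, ⟨g, hgU, hgx⟩⟩
    · have : U.restrict S.rng = Subtype.val ∘ U.restrict (e : G → S.units) := by
        funext u
        exact congrArg Subtype.val (congrFun hre u.1)
      rw [this]
      exact Topology.IsEmbedding.subtypeVal.comp (isEmbedding_restrict_subset_source e hUe)
    · have : U.restrict S.src = Subtype.val ∘ U.restrict (e' : G → S.units) := by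
        funext u
        exact congrArg Subtype.val (congrFun hse' u.1)
      rw [this]
      exact Topology.IsEmbedding.subtypeVal.comp (isEmbedding_restrict_subset_source e' hUe')
  choose U hU1 hU2 using hmain
  -- relatively open: each rng '' U x is the trace of an open set of G
  have hO : ∀ x : S.units, ∃ O : Set G, IsOpen O ∧ S.rng '' (U x) = O ∩ S.units := by
    intro x
    have h1 : IsOpen (S.rngMap '' (U x)) := hlr.isOpenMap _ (hU1 x).1.2.1
    rw [← himg] at h1
    obtain ⟨O, hOo, hOeq⟩ := isOpen_induced_iff.mp h1
    refine ⟨O, hOo, Set.Subset.antisymm ?_ ?_⟩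
    · rintro y ⟨u, hu, rfl⟩
      have : (⟨S.rng u, hrmem u⟩ : S.units) ∈ Subtype.val ⁻¹' O := by
        rw [hOeq]; exact ⟨u, hu, rfl⟩
      exact ⟨this, hrmem u⟩
    · rintro y ⟨hyO, hyu⟩
      have : (⟨y, hyu⟩ : S.units) ∈ Subtype.val ⁻¹' O := hyO
      rw [hOeq] at this
      exact this
  choose O hOopen hOeq using hO
  -- σ-compact covering: extract a countable subfamily
  obtain ⟨C, hCcomp, hCunion⟩ := hc
  have hCsub : ∀ n, C n ⊆ ⋃ x : S.units, O x := by
    intro n y hy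
    have hyu : y ∈ S.units := hCunion ▸ Set.mem_iUnion_of_mem n hy
    have := hU2 ⟨y, hyu⟩
    rw [hOeq ⟨y, hyu⟩] at this
    exact Set.mem_iUnion_of_mem ⟨y, hyu⟩ this.1
  have hsel : ∀ n, ∃ t : Finset S.units, C n ⊆ ⋃ x ∈ t, O x := fun n =>
    (hCcomp n).elim_finite_subcover O hOopen (hCsub n)
  choose t ht using hsel
  set 𝒮 : Set (Set G) := insert ∅ (⋃ n, U '' (t n : Set S.units)) with h𝒮
  have h𝒮c : 𝒮.Countable :=
    (Set.countable_iUnion fun n => ((t n).countable_toSet.image U)).insert ∅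
  obtain ⟨f, hf⟩ := h𝒮c.exists_eq_range ⟨∅, Set.mem_insert _ _⟩
  have hfP : ∀ n, S.IsCompactOpenBisection (f n) ∧ f n ⊆ S.src ⁻¹' K := by
    intro n
    have : f n ∈ 𝒮 := hf ▸ Set.mem_range_self n
    rcases this with h | h
    · rw [h]; exact ⟨empty_isCompactOpenBisection S, Set.empty_subset _⟩
    · obtain ⟨m, hm⟩ := Set.mem_iUnion.mp h
      obtain ⟨x, _, heq⟩ := hm
      rw [← heq]
      exact hU1 x
  have hcover : S.units ⊆ ⋃ n, S.rng '' (f n) := by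
    intro y hy
    obtain ⟨n, hn⟩ := Set.mem_iUnion.mp (hCunion ▸ hy : y ∈ ⋃ n, C n)
    obtain ⟨x, hxt, hyO⟩ := Set.mem_iUnion₂.mp (ht n hn)
    have hyr : y ∈ S.rng '' (U x) := by rw [hOeq x]; exact ⟨hyO, hy⟩
    have : U x ∈ 𝒮 := Set.mem_insert_of_mem _ (Set.mem_iUnion_of_mem n ⟨x, hxt, rfl⟩)
    rw [hf] at this
    obtain ⟨m, hm⟩ := this
    exact Set.mem_iUnion_of_mem m (by rw [hm]; exact hyr)
  -- disjointify
  set V : ℕ → Set G := fun n => f n \ ⋃ m < n, S.rng ⁻¹' (S.rng '' (f m)) with hV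
  have hVsub : ∀ n, V n ⊆ f n := fun n => Set.diff_subset
  have hrV : ∀ n, S.rng '' V n = S.rng '' f n \ ⋃ m < n, S.rng '' (f m) := by
    intro n
    apply Set.Subset.antisymm
    · rintro y ⟨u, ⟨huf, hum⟩, rfl⟩
      refine ⟨⟨u, huf, rfl⟩, ?_⟩
      intro hy
      obtain ⟨m, hmn, hym⟩ := Set.mem_iUnion₂.mp hy
      exact hum (Set.mem_iUnion₂.mpr ⟨m, hmn, hym⟩)
    · rintro y ⟨⟨u, huf, rfl⟩, hy⟩
      refine ⟨u, ⟨huf, ?_⟩, rfl⟩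
      intro hu
      obtain ⟨m, hmn, hum⟩ := Set.mem_iUnion₂.mp hu
      exact hy (Set.mem_iUnion₂.mpr ⟨m, hmn, hum⟩)
  have hclosedU : ∀ n, IsClosed (⋃ m < n, S.rng ⁻¹' (S.rng '' (f m))) := by
    intro n
    exact (Set.finite_Iio n).isClosed_biUnion fun m _ =>
      (hclopen (f m) (hfP m).1.1 (hfP m).1.2.1).2
  have hopenU : ∀ n, IsOpen (⋃ m < n, S.rng ⁻¹' (S.rng '' (f m))) := by
    intro n
    exact isOpen_biUnion fun m _ => (hclopen (f m) (hfP m).1.1 (hfP m).1.2.1).1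
  have hdisj : ∀ i j, i < j → Disjoint (S.rng '' V i) (S.rng '' V j) := by
    intro i j hij
    rw [hrV i, hrV j, Set.disjoint_left]
    rintro y ⟨hyi, _⟩ ⟨_, hyj⟩
    exact hyj (Set.mem_iUnion₂.mpr ⟨i, hij, hyi⟩)
  refine ⟨V, fun n => ?_, fun n => (hVsub n).trans (hfP n).2, ?_, ?_⟩
  · refine ⟨?_, ?_, ?_, ?_⟩
    · show IsCompact (f n \ ⋃ m < n, S.rng ⁻¹' (S.rng '' (f m)))
      rw [Set.diff_eq]
      exact ((hfP n).1.1).inter_right (hopenU n).isClosed_compl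
    · exact (hfP n).1.2.1.sdiff (hclosedU n)
    · exact isEmbedding_restrict_mono (hVsub n) (hfP n).1.2.2.1
    · exact isEmbedding_restrict_mono (hVsub n) (hfP n).1.2.2.2
  · intro i j hij
    rcases hij.lt_or_gt with h | h
    · exact hdisj i j h
    · exact (hdisj j i h).symm
  · apply Set.Subset.antisymm
    · exact Set.iUnion_subset fun n => by rintro y ⟨u, _, rfl⟩; exact hrmem u
    · intro y hy
      have hex : ∃ n, y ∈ S.rng '' f n := Set.mem_iUnion.mp (hcover hy)
      refine Set.mem_iUnion_of_mem (Nat.find hex) ?_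
      rw [hrV]
      refine ⟨Nat.find_spec hex, fun h => ?_⟩
      obtain ⟨m, hmn, hym⟩ := Set.mem_iUnion₂.mp h
      exact Nat.find_min hex hmn hym
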